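/- For any positive integers a_1,…,a_n, any 0 ≤ ℓ ≤ n, and any integer t ≥ 0, Θ_{t,n,ℓ}(a_1,…,a_n) ≥ Pr[ x_1 + ⋯ + x_ℓ ≤ t ], where x_1,…,x_ℓ are independent random variables and each x_i is uniformly distributed on {1,…,a_i}. (This lower bound is achieved by the strategy that exhausts box 1 until its red ball is found, then box 2, and so on.) -/

import Mathlib

open MeasureTheory ProbabilityTheory
open scoped ENNReal

/-- `theta t as ℓ`: the maximal probability, over all adaptive drawing strategies,
of drawing `ℓ` red balls within `t` draws, where the boxes contain `as` balls
(each box containing exactly one red ball), defined by the dynamic-programming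
recursion of the red ball experiment. A box reduced to `0` balls is discarded. -/
noncomputable def theta : ℕ → List ℕ → ℕ → ℝ
  | _, _, 0 => 1
  | 0, _, _ + 1 => 0
  | t + 1, as, l + 1 =>
    if h : l + 1 ≤ as.length then
      (Finset.range as.length).sup'
        (Finset.nonempty_range_iff.mpr (by omega)) (fun j =>
          ((as.getD j 1 : ℝ))⁻¹ * theta t (as.eraseIdx j) l
            + (1 - ((as.getD j 1 : ℝ))⁻¹) *
                theta t
                  (if as.getD j 1 ≤ 1 then as.eraseIdx j
                   else as.set j (as.getD j 1 - 1)) (l + 1))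
    else 0

noncomputable def p : ℕ → List ℕ → ℝ
  | _, [] => 1
  | t, a :: as => (a : ℝ)⁻¹ * ∑ k ∈ Finset.Icc 1 (min a t), p (t - k) as

lemma p_nonneg : ∀ (t : ℕ) (as : List ℕ), 0 ≤ p t as
  | _, [] => zero_le_one
  | t, a :: as => by
    show (0:ℝ) ≤ (a : ℝ)⁻¹ * ∑ k ∈ Finset.Icc 1 (min a t), p (t - k) as
    exact mul_nonneg (by positivity) (Finset.sum_nonneg fun k _ => p_nonneg _ _)

lemma p_le_theta : ∀ (t : ℕ) (as : List ℕ) (l : ℕ), (∀ x ∈ as, 1 ≤ x) → l ≤ as.length →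
    p t (as.take l) ≤ theta t as l := by
  intro t
  induction t with
  | zero =>
    intro as l hpos hl
    match l with
    | 0 => simp [theta, p]
    | l + 1 =>
      match as with
      | [] => simp at hl
      | a :: rest =>
        have : p 0 ((a :: rest).take (l+1)) = 0 := by
          show p 0 (a :: rest.take l) = 0
          show (a : ℝ)⁻¹ * ∑ k ∈ Finset.Icc 1 (min a 0), p (0 - k) (rest.take l) = 0
          simp
        rw [this]
        simp [theta]
  | succ t ih =>
    intro as l hpos hl
    match l with
    | 0 => simp [theta, p]
    | l + 1 =>
      match as with
      | [] => simp at hl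
      | a :: rest =>
        rw [theta, dif_pos hl]
        have h0 : 0 ∈ Finset.range (a :: rest).length := by simp
        refine le_trans ?_ (Finset.le_sup' _ h0)
        simp only [List.getD_cons_zero, List.eraseIdx_cons_zero, List.set_cons_zero]
        have ha : 1 ≤ a := hpos a (by simp)
        have hrest : ∀ x ∈ rest, 1 ≤ x := fun x hx => hpos x (by simp [hx])
        have hlen : l ≤ rest.length := by simpa using hl
        show p (t+1) (a :: rest.take l) ≤ _
        by_cases hA : a = 1
        · subst hA
          have hp1 : p (t+1) (1 :: rest.take l) = p t (rest.take l) := by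
            have e : p (t+1) (1 :: rest.take l)
                = ((1:ℕ) : ℝ)⁻¹ * ∑ k ∈ Finset.Icc 1 (min (1:ℕ) (t+1)), p (t+1-k) (rest.take l) := rfl
            rw [e]; simp
          rw [hp1, if_pos (le_refl 1)]
          norm_num
          exact ih rest l hrest hlen
        · have hA2 : 2 ≤ a := by omega
          rw [if_neg (by omega)]
          have key : ∑ k ∈ Finset.Icc 1 (min a (t+1)), p (t+1-k) (rest.take l)
              = p t (rest.take l) + ∑ j ∈ Finset.Icc 1 (min (a-1) t), p (t-j) (rest.take l) := by
            have hins : Finset.Icc 1 (min a (t+1)) = insert 1 (Finset.Icc 2 (min a (t+1))) := by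
              ext x; simp; omega
            rw [hins, Finset.sum_insert (by simp)]
            congr 1
            refine Finset.sum_nbij' (fun k => k - 1) (fun j => j + 1) ?_ ?_ ?_ ?_ ?_
            · intro k hk; simp at hk ⊢; omega
            · intro j hj; simp at hj ⊢; omega
            · intro k hk; simp at hk; omega
            · intro j hj; omega
            · intro k hk; simp at hk
              congr 1
              omega
          have hpt : p (t+1) (a :: rest.take l)
              = (a:ℝ)⁻¹ * p t (rest.take l) + (1 - (a:ℝ)⁻¹) * p t ((a-1) :: rest.take l) := by
            show (a : ℝ)⁻¹ * ∑ k ∈ Finset.Icc 1 (min a (t+1)), p (t+1-k) (rest.take l) = _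
            rw [key, mul_add]
            congr 1
            show (a:ℝ)⁻¹ * ∑ j ∈ Finset.Icc 1 (min (a-1) t), p (t-j) (rest.take l)
              = (1 - (a:ℝ)⁻¹) * (((a-1 : ℕ) : ℝ)⁻¹ * ∑ j ∈ Finset.Icc 1 (min (a-1) t), p (t-j) (rest.take l))
            rw [← mul_assoc]
            congr 1
            have h1 : ((a - 1 : ℕ) : ℝ) = (a : ℝ) - 1 := by
              rw [Nat.cast_sub ha]; norm_num
            rw [h1]
            have h2 : (a : ℝ) ≠ 0 := by positivity
            have h3 : (a : ℝ) - 1 ≠ 0 := by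
              have : (2 : ℝ) ≤ (a : ℝ) := by exact_mod_cast hA2
              linarith
            field_simp
          rw [hpt]
          have c1 : (0:ℝ) ≤ (a:ℝ)⁻¹ := by positivity
          have c2 : (0:ℝ) ≤ 1 - (a:ℝ)⁻¹ := by
            have : (a:ℝ)⁻¹ ≤ 1 := by
              apply inv_le_one_of_one_le₀
              exact_mod_cast ha
            linarith
          apply add_le_add
          · exact mul_le_mul_of_nonneg_left (ih rest l hrest hlen) c1
          · refine mul_le_mul_of_nonneg_left ?_ c2
            have := ih ((a-1) :: rest) (l+1) ?_ ?_
            · simpa using this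
            · intro x hx
              simp at hx
              rcases hx with h | h
              · omega
              · exact hrest x h
            · simpa using hl

lemma sum_eq_p : ∀ (ℓ : ℕ) (t : ℕ) (b : Fin ℓ → ℕ),
    ∑ k ∈ (Fintype.piFinset fun _ : Fin ℓ => Finset.range (t+1)).filter (fun k => ∑ i, k i ≤ t),
      ∏ i, (if 1 ≤ k i ∧ k i ≤ b i then ((b i : ℝ))⁻¹ else 0) = p t (List.ofFn b) := by
  intro ℓ
  induction ℓ with
  | zero =>
    intro t b
    rw [List.ofFn_zero]
    have h1 : (Fintype.piFinset fun _ : Fin 0 => Finset.range (t+1)).filter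
        (fun k => ∑ i, k i ≤ t) = {(fun i => i.elim0 : Fin 0 → ℕ)} := by
      ext k
      simp only [Finset.mem_filter, Fintype.mem_piFinset, Finset.mem_singleton]
      constructor
      · intro _; exact Subsingleton.elim _ _
      · intro _
        refine ⟨fun i => i.elim0, ?_⟩
        simp
    rw [h1]
    simp [p]
  | succ m ih =>
    intro t b
    rw [List.ofFn_succ]
    have hrhs : p t (b 0 :: List.ofFn fun i => b i.succ)
        = ((b 0 : ℕ) : ℝ)⁻¹ * ∑ j ∈ Finset.Icc 1 (min (b 0) t),
            p (t - j) (List.ofFn fun i => b i.succ) := rfl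
    rw [hrhs]
    set F := (Fintype.piFinset fun _ : Fin (m+1) => Finset.range (t+1)).filter
      (fun k => ∑ i, k i ≤ t) with hF
    have hmaps : ∀ k ∈ F, k 0 ∈ Finset.range (t+1) := by
      intro k hk
      rw [hF, Finset.mem_filter, Fintype.mem_piFinset] at hk
      exact hk.1 0
    rw [← Finset.sum_fiberwise_of_maps_to hmaps]
    have hinner : ∀ j ∈ Finset.range (t+1),
        (∑ k ∈ F.filter (fun k => k 0 = j),
          ∏ i, (if 1 ≤ k i ∧ k i ≤ b i then ((b i : ℝ))⁻¹ else 0))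
        = if 1 ≤ j ∧ j ≤ b 0 then
            ((b 0 : ℕ) : ℝ)⁻¹ * p (t - j) (List.ofFn fun i => b i.succ) else 0 := by
      intro j hj
      have hjt : j ≤ t := by simpa [Nat.lt_succ_iff] using hj
      by_cases hcond : 1 ≤ j ∧ j ≤ b 0
      · rw [if_pos hcond]
        have hterm : ∀ k ∈ F.filter (fun k => k 0 = j),
            (∏ i, (if 1 ≤ k i ∧ k i ≤ b i then ((b i : ℝ))⁻¹ else 0))
            = ((b 0 : ℕ) : ℝ)⁻¹ *
                ∏ i : Fin m, (if 1 ≤ k i.succ ∧ k i.succ ≤ b i.succ then ((b i.succ : ℝ))⁻¹ else 0) := by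
          intro k hk
          rw [Finset.mem_filter] at hk
          rw [Fin.prod_univ_succ, hk.2, if_pos hcond]
        rw [Finset.sum_congr rfl hterm, ← Finset.mul_sum]
        congr 1
        rw [← ih (t - j) (fun i => b i.succ)]
        refine Finset.sum_nbij' (fun k => fun i => k i.succ)
          (fun k' => Fin.cases j k') ?_ ?_ ?_ ?_ ?_
        · intro k hk
          rw [Finset.mem_filter] at hk ⊢
          obtain ⟨hk1, hk0⟩ := hk
          rw [hF, Finset.mem_filter, Fintype.mem_piFinset] at hk1
          obtain ⟨hmem, hsum⟩ := hk1
          rw [Fin.sum_univ_succ, hk0] at hsum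
          constructor
          · rw [Fintype.mem_piFinset]
            intro i
            rw [Finset.mem_range, Nat.lt_succ_iff]
            calc k i.succ ≤ ∑ i' : Fin m, k i'.succ :=
                  Finset.single_le_sum (f := fun i' : Fin m => k i'.succ)
                    (fun i' _ => Nat.zero_le _) (Finset.mem_univ i)
              _ ≤ t - j := by omega
          · dsimp only; omega
        · intro k' hk'
          rw [Finset.mem_filter] at hk'
          obtain ⟨hmem', hsum'⟩ := hk'
          rw [Fintype.mem_piFinset] at hmem'
          rw [Finset.mem_filter]
          constructor
          · rw [hF, Finset.mem_filter, Fintype.mem_piFinset]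
            constructor
            · intro i
              induction i using Fin.cases with
              | zero => simp; omega
              | succ i =>
                simp only [Fin.cases_succ]
                have := hmem' i
                simp only [Finset.mem_range] at this ⊢
                omega
            · rw [Fin.sum_univ_succ]
              simp only [Fin.cases_zero, Fin.cases_succ]
              omega
          · simp
        · intro k hk
          rw [Finset.mem_filter] at hk
          funext i
          refine Fin.cases ?_ ?_ i
          · show Fin.cases j (fun i => k i.succ) 0 = k 0
            rw [Fin.cases_zero]; exact hk.2.symm
          · intro i
            show Fin.cases j (fun i => k i.succ) i.succ = k i.succ
            rw [Fin.cases_succ]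
        · intro k' hk'
          funext i
          simp
        · intro k hk
          dsimp only
      · rw [if_neg hcond]
        apply Finset.sum_eq_zero
        intro k hk
        rw [Finset.mem_filter] at hk
        apply Finset.prod_eq_zero (Finset.mem_univ 0)
        rw [hk.2, if_neg hcond]
    rw [Finset.sum_congr rfl hinner]
    rw [Finset.sum_ite, Finset.sum_const_zero, add_zero, ← Finset.mul_sum]
    congr 1
    have hfe : (Finset.range (t+1)).filter (fun j => 1 ≤ j ∧ j ≤ b 0)
        = Finset.Icc 1 (min (b 0) t) := by
      ext x; simp; omega
    rw [hfe]

private lemma prob_eq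
    {n : ℕ} (a : Fin n → ℕ) (ha : ∀ i, 1 ≤ a i)
    (ℓ t : ℕ) (hℓ : ℓ ≤ n)
    {Ω : Type*} [MeasurableSpace Ω] (μ : Measure Ω) [IsProbabilityMeasure μ]
    (X : Fin ℓ → Ω → ℕ) (hmeas : ∀ i, Measurable (X i))
    (hindep : iIndepFun X μ)
    (hunif : ∀ (i : Fin ℓ) (k : ℕ),
      μ {ω | X i ω = k} =
        if 1 ≤ k ∧ k ≤ a (Fin.castLE hℓ i) then ((a (Fin.castLE hℓ i) : ℝ≥0∞))⁻¹ else 0) :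
    (μ {ω | ∑ i, X i ω ≤ t}).toReal =
      ∑ k ∈ (Fintype.piFinset fun _ : Fin ℓ => Finset.range (t+1)).filter
          (fun k => ∑ i, k i ≤ t),
        ∏ i, (if 1 ≤ k i ∧ k i ≤ a (Fin.castLE hℓ i)
          then ((a (Fin.castLE hℓ i) : ℝ))⁻¹ else 0) := by
  classical
  set F := (Fintype.piFinset fun _ : Fin ℓ => Finset.range (t+1)).filter
    (fun k => ∑ i, k i ≤ t) with hF
  have hset : {ω | ∑ i, X i ω ≤ t} = ⋃ k ∈ F, ⋂ i, X i ⁻¹' {k i} := by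
    ext ω
    simp only [Set.mem_setOf_eq, Set.mem_iUnion, Set.mem_iInter, Set.mem_preimage,
      Set.mem_singleton_iff]
    constructor
    · intro h
      refine ⟨fun i => X i ω, ?_, fun i => rfl⟩
      rw [hF, Finset.mem_filter, Fintype.mem_piFinset]
      refine ⟨fun i => ?_, h⟩
      rw [Finset.mem_range, Nat.lt_succ_iff]
      exact le_trans (Finset.single_le_sum (f := fun i => X i ω)
        (fun _ _ => Nat.zero_le _) (Finset.mem_univ i)) h
    · rintro ⟨k, hk, hkk⟩
      rw [hF, Finset.mem_filter] at hk
      calc ∑ i, X i ω = ∑ i, k i := Finset.sum_congr rfl fun i _ => hkk i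
        _ ≤ t := hk.2
  have hmeasA : ∀ k : Fin ℓ → ℕ, MeasurableSet (⋂ i, X i ⁻¹' {k i}) :=
    fun k => MeasurableSet.iInter fun i => (hmeas i) (measurableSet_singleton _)
  have hdisj : (F : Set (Fin ℓ → ℕ)).PairwiseDisjoint (fun k => ⋂ i, X i ⁻¹' {k i}) := by
    intro k _ k' _ hne
    refine Set.disjoint_left.mpr fun ω hω hω' => hne (funext fun i => ?_)
    have h1 : X i ω = k i := by simpa using Set.mem_iInter.mp hω i
    have h2 : X i ω = k' i := by simpa using Set.mem_iInter.mp hω' i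
    omega
  have hmu : μ {ω | ∑ i, X i ω ≤ t} = ∑ k ∈ F, ∏ i, μ (X i ⁻¹' {k i}) := by
    rw [hset, measure_biUnion_finset hdisj (fun k _ => hmeasA k)]
    exact Finset.sum_congr rfl fun k _ =>
      hindep.meas_iInter fun i => ⟨{k i}, measurableSet_singleton _, rfl⟩
  have huval : ∀ (i : Fin ℓ) (k : ℕ), μ (X i ⁻¹' {k}) =
      if 1 ≤ k ∧ k ≤ a (Fin.castLE hℓ i) then ((a (Fin.castLE hℓ i) : ℝ≥0∞))⁻¹ else 0 :=
    fun i k => hunif i k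
  rw [hmu, ENNReal.toReal_sum (fun k _ => ENNReal.prod_ne_top fun i _ => measure_ne_top μ _)]
  refine Finset.sum_congr rfl fun k _ => ?_
  rw [ENNReal.toReal_prod]
  refine Finset.prod_congr rfl fun i _ => ?_
  rw [huval i (k i)]
  split_ifs with h
  · simp [ENNReal.toReal_inv]
  · simp

theorem theta_ge_prob_sum_le
    {n : ℕ} (a : Fin n → ℕ) (ha : ∀ i, 1 ≤ a i)
    (ℓ t : ℕ) (hℓ : ℓ ≤ n)
    {Ω : Type*} [MeasurableSpace Ω] (μ : Measure Ω) [IsProbabilityMeasure μ]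
    (X : Fin ℓ → Ω → ℕ) (hmeas : ∀ i, Measurable (X i))
    (hindep : iIndepFun X μ)
    (hunif : ∀ (i : Fin ℓ) (k : ℕ),
      μ {ω | X i ω = k} =
        if 1 ≤ k ∧ k ≤ a (Fin.castLE hℓ i) then ((a (Fin.castLE hℓ i) : ℝ≥0∞))⁻¹ else 0) :
    (μ {ω | ∑ i, X i ω ≤ t}).toReal ≤ theta t (List.ofFn a) ℓ := by
  rw [prob_eq a ha ℓ t hℓ μ X hmeas hindep hunif]
  have hlist : List.ofFn (fun i => a (Fin.castLE hℓ i)) = (List.ofFn a).take ℓ := by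
    rw [← Fin.ofFn_take_eq_take_ofFn hℓ a]
    rfl
  refine le_trans (le_of_eq ?_) (p_le_theta t (List.ofFn a) ℓ ?_ ?_)
  · rw [← hlist]
    exact sum_eq_p ℓ t _
  · intro x hx
    rw [List.mem_ofFn] at hx
    obtain ⟨i, rfl⟩ := hx
    exact ha i
  · simpa using hℓ
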